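/- (Family of trading equilibria.) Consider the one-period groundwater market with J agents. Assume for every agent j that G_j is continuous and nondecreasing on [c̲_j, c̄_j]. Let p ≥ 0 and let ψ ∈ ℝ^J be any vector of trades satisfying Σ_j ψ_j = 0 and c̲_j ≤ W_j − ψ_j ≤ c̄_j for all j, and such that the profile (C_j, ψ_j)_{j} with C_j := W_j − ψ_j is feasible at price p. Then ((C, ψ), p) is a Nash equilibrium. -/
import Mathlib


/-- Feasibility of a strategy profile `(C, ψ)` in the one-period groundwater
market: market clearing `∑ j, ψ j = 0` and, for every agent `j`, the
consumption bounds `cl j ≤ C j ≤ cu j` and the water budget constraint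
`-∑_{i ≠ j} W i ≤ C j + ψ j ≤ W j`. -/
def Feasible (J : ℕ) (W cl cu : Fin J → ℝ) (C ψ : Fin J → ℝ) : Prop :=
  (∑ j, ψ j = 0) ∧
  ∀ j, cl j ≤ C j ∧ C j ≤ cu j ∧
    -(∑ i ∈ Finset.univ.erase j, W i) ≤ C j + ψ j ∧ C j + ψ j ≤ W j

/-- Nash equilibrium of the one-period groundwater market: the profile
`(C, ψ)` is feasible; no agent `j` can improve her payoff
`G j (C j) + ψ j * p` by a unilateral feasible deviation `(C', ψ')`; and the
price-setter cannot improve her payoff `p * ∑ j, ψ j` by choosing another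
price. -/
def NashEq (J : ℕ) (W cl cu : Fin J → ℝ) (G : Fin J → ℝ → ℝ)
    (C ψ : Fin J → ℝ) (p : ℝ) : Prop :=
  Feasible J W cl cu C ψ ∧
  (∀ j (C' ψ' : ℝ),
    Feasible J W cl cu (Function.update C j C') (Function.update ψ j ψ') →
    G j C' + ψ' * p ≤ G j (C j) + ψ j * p) ∧
  (∀ p' : ℝ, p' * ∑ j, ψ j ≤ p * ∑ j, ψ j)


theorem stmt5 (J : ℕ) (hJ : 1 ≤ J) (W cl cu : Fin J → ℝ) (G : Fin J → ℝ → ℝ)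
    (hG : ∀ j, ContinuousOn (G j) (Set.Icc (cl j) (cu j)))
    (hGmono : ∀ j, MonotoneOn (G j) (Set.Icc (cl j) (cu j)))
    (p : ℝ) (hp : 0 ≤ p) (ψ : Fin J → ℝ)
    (hψsum : ∑ j, ψ j = 0)
    (hψbounds : ∀ j, cl j ≤ W j - ψ j ∧ W j - ψ j ≤ cu j)
    (hfeas : Feasible J W cl cu (fun j => W j - ψ j) ψ) :
    NashEq J W cl cu G (fun j => W j - ψ j) ψ p := by
  refine ⟨hfeas, ?_, ?_⟩
  · intro j C' ψ' hdev
    obtain ⟨hsum, hbd⟩ := hdev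
    -- sum of updated ψ forces ψ' = ψ j
    have hψeq : ψ' = ψ j := by
      have := Finset.sum_update_of_mem (Finset.mem_univ j) ψ ψ'
      rw [this] at hsum
      have h2 : ∑ i ∈ Finset.univ \ {j}, ψ i = -ψ j := by
        rw [Finset.sdiff_singleton_eq_erase]
        have := Finset.add_sum_erase Finset.univ ψ (Finset.mem_univ j)
        linarith [hψsum]
      linarith
    obtain ⟨h1, h2, _, h4⟩ := hbd j
    simp only [Function.update_self] at h1 h2 h4
    have hC' : C' ≤ W j - ψ j := by rw [hψeq] at h4; linarith
    have hmem : C' ∈ Set.Icc (cl j) (cu j) := ⟨h1, h2⟩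
    have hmem2 : W j - ψ j ∈ Set.Icc (cl j) (cu j) := ⟨(hψbounds j).1, (hψbounds j).2⟩
    have := hGmono j hmem hmem2 hC'
    rw [hψeq]
    linarith
  · intro p'
    rw [hψsum]
    simp
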